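/- Let 𝓗 be a connected hypergraph on H, and let S and T be distinct constructions of 𝓗 joined by an edge whose non-singleton node is {x,y}, with the node {x} the parent of the node {y} in S; set K = supp(S↾x). Then v^S_w = v^T_w for every w ∈ H with w ∉ {x,y}, and v^S_x − v^T_x = λ = v^T_y − v^S_y, where λ = |{e ∈ Sat(𝓗) : {x,y} ⊆ e ⊆ K}|; moreover λ ≥ 1. -/

import Mathlib

open scoped Classical

noncomputable section

/-! ## Hypergraphs (nestohedra combinatorics), after Curien–Laplante-Anfossi:
hypergraphs, restrictions, connectivity, saturation, reconnected restriction,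
constructs/constructions, the face order, the flip rewriting, and terms over the
associated signatures. -/

/-- A hypergraph on a finite vertex set: a finite set of nonempty hyperedges whose union is
the vertex set, assumed atomic (every singleton is a hyperedge). -/
structure AtomicHypergraph (α : Type*) [DecidableEq α] where
  verts : Finset α
  edges : Finset (Finset α)
  edges_nonempty : ∀ e ∈ edges, e.Nonempty
  edges_subset : ∀ e ∈ edges, e ⊆ verts
  atomic : ∀ v ∈ verts, {v} ∈ edges

namespace AtomicHypergraph

variable {α : Type*} [DecidableEq α]

/-- The plain restriction `𝓗_X` of a hypergraph to a subset `X` of its vertices. -/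
def restrict (H : AtomicHypergraph α) (X : Finset α) : AtomicHypergraph α where
  verts := X ∩ H.verts
  edges := H.edges.filter (· ⊆ X)
  edges_nonempty e he := H.edges_nonempty e (Finset.mem_filter.mp he).1
  edges_subset e he :=
    Finset.subset_inter (Finset.mem_filter.mp he).2 (H.edges_subset e (Finset.mem_filter.mp he).1)
  atomic v hv := by
    rcases Finset.mem_inter.mp hv with ⟨h1, h2⟩
    exact Finset.mem_filter.mpr ⟨H.atomic v h2, Finset.singleton_subset_iff.mpr h1⟩

/-- A hypergraph is connected if its vertex set is nonempty and admits no nontrivial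
partition `X₁ ∪ X₂` such that every edge lies in `X₁` or in `X₂`. -/
def Connected (H : AtomicHypergraph α) : Prop :=
  H.verts.Nonempty ∧ ∀ X₁ X₂ : Finset α, X₁.Nonempty → X₂.Nonempty →
    Disjoint X₁ X₂ → X₁ ∪ X₂ = H.verts → ∃ e ∈ H.edges, ¬e ⊆ X₁ ∧ ¬e ⊆ X₂

/-- `C` is (the vertex set of) a connected component of `H`: a maximal connected subset. -/
def IsComponent (H : AtomicHypergraph α) (C : Finset α) : Prop :=
  C ⊆ H.verts ∧ (H.restrict C).Connected ∧
    ∀ D : Finset α, C ⊆ D → D ⊆ H.verts → (H.restrict D).Connected → D = C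

/-- `y` and `z` lie in the same connected component of `H`. -/
def SameComponent (H : AtomicHypergraph α) (y z : α) : Prop :=
  ∃ C : Finset α, H.IsComponent C ∧ y ∈ C ∧ z ∈ C

/-- The saturation `Sat(𝓗)`: the set of (nonempty) connected subsets of vertices. -/
def sat (H : AtomicHypergraph α) : Finset (Finset α) :=
  H.verts.powerset.filter fun X => (H.restrict X).Connected

theorem singleton_connected (H : AtomicHypergraph α) {v : α} (hv : v ∈ H.verts) :
    (H.restrict {v}).Connected := by
  constructor
  · exact ⟨v, Finset.mem_inter.mpr ⟨Finset.mem_singleton_self v, hv⟩⟩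
  · intro X₁ X₂ h₁ h₂ hd hu
    exfalso
    have hv' : ({v} : Finset α) ∩ H.verts = {v} :=
      Finset.inter_eq_left.mpr (Finset.singleton_subset_iff.mpr hv)
    have hu' : X₁ ∪ X₂ = ({v} : Finset α) := hu.trans hv'
    have hX₁ : X₁ ⊆ {v} := hu' ▸ Finset.subset_union_left
    have hX₂ : X₂ ⊆ {v} := hu' ▸ Finset.subset_union_right
    obtain ⟨a, ha⟩ := h₁
    obtain ⟨b, hb⟩ := h₂
    have ha' := Finset.mem_singleton.mp (hX₁ ha)
    have hb' := Finset.mem_singleton.mp (hX₂ hb)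
    subst ha'; exact Finset.disjoint_left.mp hd ha (hb' ▸ hb)

/-- The reconnected restriction `𝓗 ↾ X` of `𝓗` to `X`. -/
def reconRestrict (H : AtomicHypergraph α) (X : Finset α) : AtomicHypergraph α where
  verts := X ∩ H.verts
  edges := (H.sat.image (· ∩ X)).filter (·.Nonempty)
  edges_nonempty e he := (Finset.mem_filter.mp he).2
  edges_subset := by
    intro e he
    rcases Finset.mem_image.mp (Finset.mem_filter.mp he).1 with ⟨Z, hZ, rfl⟩
    have hZv : Z ⊆ H.verts := Finset.mem_powerset.mp (Finset.mem_filter.mp hZ).1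
    exact fun a ha => Finset.mem_inter.mpr
      ⟨(Finset.mem_inter.mp ha).2, hZv (Finset.mem_inter.mp ha).1⟩
  atomic := by
    intro v hv
    rcases Finset.mem_inter.mp hv with ⟨h1, h2⟩
    refine Finset.mem_filter.mpr ⟨Finset.mem_image.mpr ⟨{v}, ?_, ?_⟩, ?_⟩
    · exact Finset.mem_filter.mpr
        ⟨Finset.mem_powerset.mpr (Finset.singleton_subset_iff.mpr h2),
         H.singleton_connected h2⟩
    · exact Finset.inter_eq_left.mpr (Finset.singleton_subset_iff.mpr h1)
    · exact ⟨v, by simp [Finset.inter_eq_left.mpr (Finset.singleton_subset_iff.mpr h1)]⟩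

/-- `x ⇝ {y,z}` in `𝓗`: after removing `x`, the vertices `y` and `z` lie in the same
connected component.  Its negation is "`x` disconnects `y` and `z` in `𝓗`". -/
def Links (H : AtomicHypergraph α) (x y z : α) : Prop :=
  (H.restrict (H.verts \ {x})).SameComponent y z

/-- A hypergraph is contextual if for every connected subset `Y` of cardinality at least 3
and all distinct `x, y, z ∈ Y`, `x` disconnects `y` and `z` in `𝓗_Y` iff it does in `𝓗`. -/
def Contextual (H : AtomicHypergraph α) : Prop :=
  ∀ Y : Finset α, Y ⊆ H.verts → (H.restrict Y).Connected → 3 ≤ Y.card →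
    ∀ x y z : α, x ∈ Y → y ∈ Y → z ∈ Y → x ≠ y → y ≠ z → x ≠ z →
      ((H.restrict Y).Links x y z ↔ H.Links x y z)

end AtomicHypergraph

/-- Finite rooted trees with nodes decorated by finite sets (potential constructs). -/
inductive FTree (α : Type*) : Type _ where
  | node : Finset α → List (FTree α) → FTree α

namespace FTree

variable {α : Type*} [DecidableEq α]

/-- The decoration of the root node. -/
def label : FTree α → Finset α
  | node Y _ => Y

/-- The list of children of the root node. -/
def children : FTree α → List (FTree α)
  | node _ ts => ts

/-- The support of a tree: the union of the decorations of its nodes. -/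
def support : FTree α → Finset α
  | node Y [] => Y
  | node Y (t :: ts) => support t ∪ support (node Y ts)

/-- The list of decorations of the nodes of a tree. -/
def labels : FTree α → List (Finset α)
  | node Y [] => [Y]
  | node Y (t :: ts) => labels t ++ labels (node Y ts)

/-- The dimension of a construct: the sum over its nodes `X` of `|X| - 1`. -/
def dim (T : FTree α) : ℕ := (T.labels.map fun X => X.card - 1).sum

mutual
  /-- The (full) subtree rooted at the node decorated by `X`, if any. -/
  def subtreeAt : FTree α → Finset α → Option (FTree α)
    | node Y ts, X => if Y = X then some (node Y ts) else subtreeAtList ts X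
  def subtreeAtList : List (FTree α) → Finset α → Option (FTree α)
    | [], _ => none
    | t :: ts, X => (subtreeAt t X).elim (subtreeAtList ts X) some
end

/-- The support `supp (T ↾ X)` of the subtree rooted at the node decorated by `X`
(or `∅` if there is no such node). -/
def suppAt (T : FTree α) (X : Finset α) : Finset α :=
  ((T.subtreeAt X).map support).getD ∅

mutual
  /-- The list of supports of the subtrees rooted at the nodes of `T` (its nested set). -/
  def nests : FTree α → List (Finset α)
    | node Y ts => support (node Y ts) :: nestsList ts
  def nestsList : List (FTree α) → List (Finset α)
    | [] => []
    | t :: ts => nests t ++ nestsList ts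
end

/-- The nested set of a tree, as a finite set. -/
def nestSet (T : FTree α) : Finset (Finset α) := T.nests.toFinset

/-- `S ≺ T` (`S` is covered by `T`) in the face order: `T` is obtained from `S` by
contracting one edge between a node and its father (equivalently, the nested set of `T`
is obtained from that of `S` by removing one non-root element). -/
def CoveredBy (S T : FTree α) : Prop :=
  ∃ N ∈ S.nests, N ≠ S.support ∧ T.nestSet = S.nestSet.erase N

/-- The face (subface) order `S ≼ T` on constructs: the reflexive–transitive closure of
the covering relation `≺`. -/
def FaceLe (S T : FTree α) : Prop := Relation.ReflTransGen CoveredBy S T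

/-- `IsSubtree S T`: `S` is a (full) subtree of `T`. -/
inductive IsSubtree : FTree α → FTree α → Prop
  | refl (t : FTree α) : IsSubtree t t
  | child {s t u : FTree α} : IsSubtree s t → t ∈ u.children → IsSubtree s u

/-- In `T`, the node decorated by `X` has a child decorated by `Y`. -/
def ParentChild (X Y : Finset α) (T : FTree α) : Prop :=
  ∃ R : FTree α, IsSubtree R T ∧ R.label = X ∧ ∃ t ∈ R.children, t.label = Y

mutual
  /-- Pruning: remove all (subtrees rooted at) nodes whose decoration is not a subset
  of `X`, keeping the root. -/
  def prune (X : Finset α) : FTree α → FTree α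
    | node Y ts => node Y (pruneList X ts)
  def pruneList (X : Finset α) : List (FTree α) → List (FTree α)
    | [] => []
    | t :: ts => if t.label ⊆ X then prune X t :: pruneList X ts else pruneList X ts
end

end FTree

/-- `IsConstruct H T`: the tree `T` is a construct of the hypergraph `H`: its root `Y` is a
nonempty subset of the vertices, its children are constructs of the connected components of
`𝓗 ∖ Y` (one for each component, listed by increasing maximal vertex). -/
inductive IsConstruct {α : Type*} [LinearOrder α] : AtomicHypergraph α → FTree α → Prop
  | node {H : AtomicHypergraph α} (Y : Finset α) (ts : List (FTree α))
      (hY : Y.Nonempty) (hYsub : Y ⊆ H.verts)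
      (hmem : ∀ t ∈ ts, (H.restrict (H.verts \ Y)).IsComponent t.support)
      (hcover : ∀ C : Finset α, (H.restrict (H.verts \ Y)).IsComponent C →
        ∃ t ∈ ts, t.support = C)
      (hsorted : ts.Pairwise fun a b => a.support.max < b.support.max)
      (hchild : ∀ t ∈ ts, IsConstruct (H.restrict t.support) t) :
      IsConstruct H (FTree.node Y ts)

section ConstructionOrder

variable {α : Type*} [LinearOrder α]

/-- A construction: a construct all of whose nodes are singletons (a vertex of the
nestohedron). -/
def IsConstruction (H : AtomicHypergraph α) (T : FTree α) : Prop :=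
  IsConstruct H T ∧ ∀ X ∈ T.labels, X.card = 1

/-- An `X`-face: a 2-dimensional construct whose unique non-singleton node is decorated
by `X`, of cardinality 3. -/
def IsXFace (H : AtomicHypergraph α) (X : Finset α) (T : FTree α) : Prop :=
  IsConstruct H T ∧ X.card = 3 ∧ X ∈ T.labels ∧ ∀ Y ∈ T.labels, Y ≠ X → Y.card = 1

/-- Two distinct constructions are joined by an edge of the nestohedron: both are covered
by a common 1-dimensional construct. -/
def EdgeJoined (H : AtomicHypergraph α) (S T : FTree α) : Prop :=
  IsConstruction H S ∧ IsConstruction H T ∧ S ≠ T ∧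
  ∃ V : FTree α, IsConstruct H V ∧ V.dim = 1 ∧ FTree.CoveredBy S V ∧ FTree.CoveredBy T V

/-- The flip rewriting relation `S → T` on constructions of an ordered hypergraph:
`S` and `T` are the two endpoints of an edge whose 1-dimensional face has unique
non-singleton node `{x, y}` with `x < y`, and in `S` the node `{x}` is the parent of the
node `{y}`. -/
def Flip (H : AtomicHypergraph α) (S T : FTree α) : Prop :=
  IsConstruction H S ∧ IsConstruction H T ∧ S ≠ T ∧
  ∃ (V : FTree α) (x y : α), IsConstruct H V ∧ V.dim = 1 ∧ x ≠ y ∧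
    ({x, y} : Finset α) ∈ V.labels ∧ FTree.CoveredBy S V ∧ FTree.CoveredBy T V ∧
    FTree.ParentChild ({x} : Finset α) ({y} : Finset α) S ∧ x < y

/-- The coordinate vector of a construction `S` of `H`:
`v^S_x = |{e ∈ Sat(𝓗) : x ∈ e ⊆ supp (S ↾ x)}|`. -/
def coordVec (H : AtomicHypergraph α) (S : FTree α) (x : α) : ℕ :=
  (H.sat.filter fun e => x ∈ e ∧ e ⊆ S.suppAt {x}).card

end ConstructionOrder

/-- Raw terms over the signature `Σ_𝓗` (and `Σ^c_𝓗`): variables are (connected) subsets,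
function symbols are pairs `(X, Y)` of subsets, applied to a list of arguments. -/
inductive HTerm (α : Type*) : Type _ where
  | var : Finset α → HTerm α
  | app : Finset α → Finset α → List (HTerm α) → HTerm α

namespace HTerm

variable {α : Type*} [DecidableEq α]

/-- The (output) sort of a term. -/
def sortOf : HTerm α → Finset α
  | var A => A
  | app _ Y _ => Y

/-- The list of variables occurring in a term. -/
def varsList : HTerm α → List (Finset α)
  | var A => [A]
  | app _ _ [] => []
  | app X Y (t :: ts) => varsList t ++ varsList (app X Y ts)

/-- The list of first components of the function symbols occurring in a term. -/
def appFirsts : HTerm α → List (Finset α)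
  | var _ => []
  | app X _ [] => [X]
  | app X Y (t :: ts) => appFirsts t ++ appFirsts (app X Y ts)

/-- A term is closed if it contains no variables. -/
def Closed (t : HTerm α) : Prop := t.varsList = []

/-- The union `⋃ var(t)` of the variables of a term. -/
def varsUnion (t : HTerm α) : Finset α := t.varsList.foldr (· ∪ ·) ∅

mutual
  /-- Projection of a term to a decorated tree: every function symbol `(X, Y)` is sent to
  its first component `X`, and all variables are pruned. -/
  def toTree : HTerm α → FTree α
    | .var A => .node A []
    | .app X _ ts => .node X (toTreeList ts)
  def toTreeList : List (HTerm α) → List (FTree α)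
    | [] => []
    | .var _ :: ts => toTreeList ts
    | t :: ts => toTree t :: toTreeList ts
end

end HTerm

/-- Well-formed terms over the signature `Σ_𝓗` associated with the hypergraph `H`:
a variable is a connected subset (its own sort); a function symbol `(X, Y)` (with
`∅ ≠ X ⊆ Y ⊆ H` and `Y` connected) is applied to arguments whose sorts are exactly the
connected components of `𝓗_Y ∖ X`, listed by increasing maximal vertex. -/
inductive IsTerm {α : Type*} [LinearOrder α] (H : AtomicHypergraph α) : HTerm α → Prop
  | var (A : Finset α) : A ⊆ H.verts → (H.restrict A).Connected → IsTerm H (.var A)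
  | app (X Y : Finset α) (ts : List (HTerm α)) :
      X.Nonempty → X ⊆ Y → Y ⊆ H.verts → (H.restrict Y).Connected →
      (∀ t ∈ ts, (H.restrict (Y \ X)).IsComponent t.sortOf) →
      (∀ C : Finset α, (H.restrict (Y \ X)).IsComponent C → ∃ t ∈ ts, t.sortOf = C) →
      ts.Pairwise (fun a b => a.sortOf.max < b.sortOf.max) →
      (∀ t ∈ ts, IsTerm H t) →
      IsTerm H (.app X Y ts)
namespace AtomicHypergraph

variable {α : Type*} [DecidableEq α]

theorem hg_ext {G G' : AtomicHypergraph α} (hv : G.verts = G'.verts) (he : G.edges = G'.edges) :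
    G = G' := by
  cases G; cases G'; simp_all

@[simp] theorem restrict_verts (G : AtomicHypergraph α) (A : Finset α) (hA : A ⊆ G.verts) :
    (G.restrict A).verts = A := by
  simp [restrict, Finset.inter_eq_left.mpr hA]

theorem restrict_restrict (G : AtomicHypergraph α) {A B : Finset α} (h : B ⊆ A) :
    (G.restrict A).restrict B = G.restrict B := by
  apply hg_ext
  · simp only [restrict]
    rw [← Finset.inter_assoc, Finset.inter_eq_left.mpr h]
  · simp only [restrict, Finset.filter_filter]
    apply Finset.filter_congr
    intro e _
    constructor
    · exact fun h' => h'.2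
    · exact fun h' => ⟨h'.trans h, h'⟩

theorem restrict_self (G : AtomicHypergraph α) : G.restrict G.verts = G := by
  apply hg_ext
  · simp [restrict]
  · simp only [restrict]
    exact Finset.filter_true_of_mem G.edges_subset

theorem mem_sat {G : AtomicHypergraph α} {e : Finset α} :
    e ∈ G.sat ↔ e ⊆ G.verts ∧ (G.restrict e).Connected := by
  simp [sat]

theorem Connected.nonempty {G : AtomicHypergraph α} {A : Finset α} (hA : A ⊆ G.verts)
    (h : (G.restrict A).Connected) : A.Nonempty := by
  obtain ⟨v, hv⟩ := h.1
  rw [restrict_verts _ _ hA] at hv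
  exact ⟨v, hv⟩

/-- Union of two overlapping connected sets is connected. -/
theorem connected_union {G : AtomicHypergraph α} {A B : Finset α} (hA : A ⊆ G.verts)
    (hB : B ⊆ G.verts) (hAc : (G.restrict A).Connected) (hBc : (G.restrict B).Connected)
    (hAB : (A ∩ B).Nonempty) : (G.restrict (A ∪ B)).Connected := by
  obtain ⟨v, hv⟩ := hAB
  rw [Finset.mem_inter] at hv
  have hU : A ∪ B ⊆ G.verts := Finset.union_subset hA hB
  constructor
  · rw [restrict_verts _ _ hU]
    exact ⟨v, Finset.mem_union_left _ hv.1⟩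
  intro X₁ X₂ h₁ h₂ hd hu
  rw [restrict_verts _ _ hU] at hu
  -- key step, for a connected C ⊆ A ∪ B with v ∈ C ∩ X₁ and C ∩ X₂ nonempty
  have key : ∀ C : Finset α, C ⊆ G.verts → (G.restrict C).Connected → C ⊆ A ∪ B →
      ∀ Z₁ Z₂ : Finset α, Z₁ ∪ Z₂ = A ∪ B → Disjoint Z₁ Z₂ →
      (C ∩ Z₁).Nonempty → (C ∩ Z₂).Nonempty →
      ∃ e ∈ (G.restrict (A ∪ B)).edges, ¬e ⊆ Z₁ ∧ ¬e ⊆ Z₂ := by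
    intro C hCv hCc hCU Z₁ Z₂ hZu hZd hn₁ hn₂
    have hCsplit : (C ∩ Z₁) ∪ (C ∩ Z₂) = (G.restrict C).verts := by
      rw [restrict_verts _ _ hCv, ← Finset.inter_union_distrib_left]
      rw [hZu]
      exact Finset.inter_eq_left.mpr hCU
    obtain ⟨e, he, he₁, he₂⟩ := hCc.2 (C ∩ Z₁) (C ∩ Z₂) hn₁ hn₂
      (hZd.mono Finset.inter_subset_right Finset.inter_subset_right) hCsplit
    simp only [restrict, Finset.mem_filter] at he
    refine ⟨e, ?_, ?_, ?_⟩
    · exact Finset.mem_filter.mpr ⟨he.1, he.2.trans hCU⟩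
    · intro h; exact he₁ (Finset.subset_inter he.2 h)
    · intro h; exact he₂ (Finset.subset_inter he.2 h)
  -- v is in X₁ or X₂
  have hv' : v ∈ X₁ ∪ X₂ := by rw [hu]; exact Finset.mem_union_left _ hv.1
  have main : ∀ Z₁ Z₂ : Finset α, Z₁ ∪ Z₂ = A ∪ B → Disjoint Z₁ Z₂ →
      Z₂.Nonempty → v ∈ Z₁ →
      ∃ e ∈ (G.restrict (A ∪ B)).edges, ¬e ⊆ Z₁ ∧ ¬e ⊆ Z₂ := by
    intro Z₁ Z₂ hZu hZd h₂' hvZ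
    by_cases hA2 : (A ∩ Z₂).Nonempty
    · exact key A hA hAc Finset.subset_union_left Z₁ Z₂ hZu hZd ⟨v, Finset.mem_inter.mpr ⟨hv.1, hvZ⟩⟩ hA2
    · have hB2 : (B ∩ Z₂).Nonempty := by
        obtain ⟨w, hw⟩ := h₂'
        have hwAB : w ∈ A ∪ B := by rw [← hZu]; exact Finset.mem_union_right _ hw
        rcases Finset.mem_union.mp hwAB with h | h
        · exact absurd ⟨w, Finset.mem_inter.mpr ⟨h, hw⟩⟩ hA2
        · exact ⟨w, Finset.mem_inter.mpr ⟨h, hw⟩⟩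
      exact key B hB hBc Finset.subset_union_right Z₁ Z₂ hZu hZd ⟨v, Finset.mem_inter.mpr ⟨hv.2, hvZ⟩⟩ hB2
  rcases Finset.mem_union.mp hv' with h | h
  · exact main X₁ X₂ hu hd h₂ h
  · obtain ⟨e, he, h1, h2⟩ := main X₂ X₁ (by rw [Finset.union_comm]; exact hu) hd.symm h₁ h
    exact ⟨e, he, h2, h1⟩

/-- Every connected subset extends to a component. -/
theorem exists_component {G : AtomicHypergraph α} {e : Finset α} (he : e ⊆ G.verts)
    (hec : (G.restrict e).Connected) : ∃ C, G.IsComponent C ∧ e ⊆ C := by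
  classical
  set s := G.verts.powerset.filter (fun D => e ⊆ D ∧ (G.restrict D).Connected) with hs
  have hes : e ∈ s := Finset.mem_filter.mpr ⟨Finset.mem_powerset.mpr he, subset_rfl, hec⟩
  obtain ⟨C, hC, hCmax⟩ := Finset.exists_max_image s Finset.card ⟨e, hes⟩
  rw [hs, Finset.mem_filter, Finset.mem_powerset] at hC
  refine ⟨C, ⟨hC.1, hC.2.2, ?_⟩, hC.2.1⟩
  intro D hCD hDv hDc
  have hDs : D ∈ s := Finset.mem_filter.mpr ⟨Finset.mem_powerset.mpr hDv, hC.2.1.trans hCD, hDc⟩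
  exact (Finset.eq_of_subset_of_card_le hCD (hCmax D hDs)).symm

theorem IsComponent.subset {G : AtomicHypergraph α} {C : Finset α} (h : G.IsComponent C) :
    C ⊆ G.verts := h.1

theorem IsComponent.nonempty {G : AtomicHypergraph α} {C : Finset α} (h : G.IsComponent C) :
    C.Nonempty := Connected.nonempty h.1 h.2.1

/-- Two components that meet are equal. -/
theorem IsComponent.eq_of_meet {G : AtomicHypergraph α} {C C' : Finset α} (h : G.IsComponent C)
    (h' : G.IsComponent C') (hm : (C ∩ C').Nonempty) : C = C' := by
  have hu : (G.restrict (C ∪ C')).Connected :=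
    connected_union h.1 h'.1 h.2.1 h'.2.1 hm
  have h1 : C ∪ C' = C := h.2.2 _ Finset.subset_union_left (Finset.union_subset h.1 h'.1) hu
  have h2 : C ∪ C' = C' := h'.2.2 _ Finset.subset_union_right (Finset.union_subset h.1 h'.1) hu
  rw [← h1, h2]

/-- Every vertex lies in a component. -/
theorem exists_component_mem {G : AtomicHypergraph α} {v : α} (hv : v ∈ G.verts) :
    ∃ C, G.IsComponent C ∧ v ∈ C := by
  obtain ⟨C, hC, hsub⟩ := exists_component (Finset.singleton_subset_iff.mpr hv)
    (G.singleton_connected hv)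
  exact ⟨C, hC, hsub (Finset.mem_singleton_self v)⟩

/-- A connected subset of a component-restriction setting lies inside the component
containing one of its points. -/
theorem subset_component {G : AtomicHypergraph α} {C e : Finset α} (hC : G.IsComponent C)
    {w : α} (hw : w ∈ C) (hwe : w ∈ e) (he : e ⊆ G.verts)
    (hec : (G.restrict e).Connected) : e ⊆ C := by
  obtain ⟨C', hC', hsub⟩ := exists_component he hec
  have : C = C' := hC.eq_of_meet hC' ⟨w, Finset.mem_inter.mpr ⟨hw, hsub hwe⟩⟩
  rw [this]; exact hsub

end AtomicHypergraph
namespace FTree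

set_option linter.unusedSectionVars false

variable {α : Type*} [DecidableEq α]

@[simp] theorem label_node (Y : Finset α) (ts : List (FTree α)) :
    (node Y ts).label = Y := rfl

@[simp] theorem children_node (Y : Finset α) (ts : List (FTree α)) :
    (node Y ts).children = ts := rfl

theorem mem_support_node {Y : Finset α} {ts : List (FTree α)} {a : α} :
    a ∈ (node Y ts).support ↔ a ∈ Y ∨ ∃ t ∈ ts, a ∈ t.support := by
  induction ts with
  | nil => simp [support]
  | cons t ts ih =>
    simp only [support, Finset.mem_union, ih, List.mem_cons]
    constructor
    · rintro (h | h | ⟨u, hu, h⟩)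
      · exact Or.inr ⟨t, Or.inl rfl, h⟩
      · exact Or.inl h
      · exact Or.inr ⟨u, Or.inr hu, h⟩
    · rintro (h | ⟨u, (rfl | hu), h⟩)
      · exact Or.inr (Or.inl h)
      · exact Or.inl h
      · exact Or.inr (Or.inr ⟨u, hu, h⟩)

theorem mem_labels_node {Y : Finset α} {ts : List (FTree α)} {X : Finset α} :
    X ∈ (node Y ts).labels ↔ X = Y ∨ ∃ t ∈ ts, X ∈ t.labels := by
  induction ts with
  | nil => simp [labels]
  | cons t ts ih =>
    simp only [labels, List.mem_append, ih, List.mem_cons]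
    constructor
    · rintro (h | h | ⟨u, hu, h⟩)
      · exact Or.inr ⟨t, Or.inl rfl, h⟩
      · exact Or.inl h
      · exact Or.inr ⟨u, Or.inr hu, h⟩
    · rintro (h | ⟨u, (rfl | hu), h⟩)
      · exact Or.inr (Or.inl h)
      · exact Or.inl h
      · exact Or.inr (Or.inr ⟨u, hu, h⟩)

theorem mem_nestsList {ts : List (FTree α)} {N : Finset α} :
    N ∈ nestsList ts ↔ ∃ t ∈ ts, N ∈ t.nests := by
  induction ts with
  | nil => simp [nestsList]
  | cons t ts ih =>
    simp only [nestsList, List.mem_append, ih, List.mem_cons]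
    constructor
    · rintro (h | ⟨u, hu, h⟩)
      · exact ⟨t, Or.inl rfl, h⟩
      · exact ⟨u, Or.inr hu, h⟩
    · rintro ⟨u, (rfl | hu), h⟩
      · exact Or.inl h
      · exact Or.inr ⟨u, hu, h⟩

theorem mem_nests_node {Y : Finset α} {ts : List (FTree α)} {N : Finset α} :
    N ∈ (node Y ts).nests ↔ N = (node Y ts).support ∨ ∃ t ∈ ts, N ∈ t.nests := by
  rw [show (node Y ts).nests = (node Y ts).support :: nestsList ts from rfl]
  simp [mem_nestsList]

theorem mem_nestSet {U : FTree α} {N : Finset α} : N ∈ U.nestSet ↔ N ∈ U.nests := by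
  simp [nestSet]

theorem label_subset_support (U : FTree α) : U.label ⊆ U.support := by
  cases U with
  | node Y ts => intro a ha; exact mem_support_node.mpr (Or.inl ha)

theorem child_support_subset {U t : FTree α} (h : t ∈ U.children) :
    t.support ⊆ U.support := by
  cases U with
  | node Y ts =>
    intro a ha
    exact mem_support_node.mpr (Or.inr ⟨t, h, ha⟩)

theorem IsSubtree.support_subset {R U : FTree α} (h : IsSubtree R U) :
    R.support ⊆ U.support := by
  induction h with
  | refl => exact subset_rfl
  | child h₁ h₂ ih => exact ih.trans (child_support_subset h₂)

theorem IsSubtree.trans {R' R U : FTree α} (h1 : IsSubtree R' R) (h2 : IsSubtree R U) :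
    IsSubtree R' U := by
  induction h2 with
  | refl => exact h1
  | child h₁ h₂ ih => exact IsSubtree.child ih h₂

theorem isSubtree_of_child {t U : FTree α} (h : t ∈ U.children) : IsSubtree t U :=
  IsSubtree.child (IsSubtree.refl t) h

theorem IsSubtree.cases {R U : FTree α} (h : IsSubtree R U) :
    R = U ∨ ∃ t ∈ U.children, IsSubtree R t := by
  cases h with
  | refl => exact Or.inl rfl
  | child h₁ h₂ => exact Or.inr ⟨_, h₂, h₁⟩

theorem IsSubtree.label_mem {R U : FTree α} (h : IsSubtree R U) :
    R.label ∈ U.labels := by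
  induction h with
  | refl =>
    cases R with
    | node Y ts => exact mem_labels_node.mpr (Or.inl rfl)
  | child h₁ h₂ ih =>
    rename_i s t u
    cases u with
    | node Y ts => exact mem_labels_node.mpr (Or.inr ⟨t, h₂, ih⟩)

theorem IsSubtree.support_mem_nests {R U : FTree α} (h : IsSubtree R U) :
    R.support ∈ U.nests := by
  induction h with
  | refl =>
    cases R with
    | node Y ts => exact mem_nests_node.mpr (Or.inl rfl)
  | child h₁ h₂ ih =>
    rename_i s t u
    cases u with
    | node Y ts => exact mem_nests_node.mpr (Or.inr ⟨t, h₂, ih⟩)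

theorem mem_labels_of_subtree {R U : FTree α} (h : IsSubtree R U) {X : Finset α}
    (hX : X ∈ R.labels) : X ∈ U.labels := by
  induction h with
  | refl => exact hX
  | child h₁ h₂ ih =>
    rename_i s t u
    cases u with
    | node Y ts => exact mem_labels_node.mpr (Or.inr ⟨t, h₂, ih⟩)

theorem mem_nests_of_subtree {R U : FTree α} (h : IsSubtree R U) {N : Finset α}
    (hN : N ∈ R.nests) : N ∈ U.nests := by
  induction h with
  | refl => exact hN
  | child h₁ h₂ ih =>
    rename_i s t u
    cases u with
    | node Y ts => exact mem_nests_node.mpr (Or.inr ⟨t, h₂, ih⟩)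

theorem subtreeAtList_eq_some {ts : List (FTree α)} {X : Finset α} {R : FTree α}
    (h : subtreeAtList ts X = some R) : ∃ t ∈ ts, subtreeAt t X = some R := by
  induction ts with
  | nil => simp [subtreeAtList] at h
  | cons t ts ih =>
    rw [subtreeAtList] at h
    cases hh : subtreeAt t X with
    | none =>
      rw [hh] at h
      obtain ⟨u, hu, h'⟩ := ih h
      exact ⟨u, List.mem_cons_of_mem _ hu, h'⟩
    | some R' =>
      rw [hh] at h
      simp only [Option.elim] at h
      exact ⟨t, List.mem_cons_self, by rw [hh, h]⟩

theorem subtreeAtList_isSome {ts : List (FTree α)} {X : Finset α} {t : FTree α}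
    (ht : t ∈ ts) (h : (subtreeAt t X).isSome) : (subtreeAtList ts X).isSome := by
  induction ts with
  | nil => simp at ht
  | cons u ts ih =>
    rw [subtreeAtList]
    cases hh : subtreeAt u X with
    | none =>
      simp only [Option.elim]
      rcases List.mem_cons.mp ht with rfl | ht'
      · rw [hh] at h; simp at h
      · exact ih ht'
    | some R => simp [Option.elim]

end FTree
section ConstructLemmas

set_option linter.unusedSectionVars false

variable {α : Type*} [LinearOrder α]

open FTree AtomicHypergraph

theorem IsConstruct.support_eq_verts {G : AtomicHypergraph α} {U : FTree α}
    (hU : IsConstruct G U) : U.support = G.verts := by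
  induction hU with
  | node Y ts hY hYsub hmem hcover hsorted hchild ih =>
    rename_i G
    have hval : ∀ t ∈ ts, t.support ⊆ G.verts \ Y := by
      intro t ht
      have := (hmem t ht).subset
      rwa [AtomicHypergraph.restrict_verts _ _ (Finset.sdiff_subset)] at this
    ext a
    rw [FTree.mem_support_node]
    constructor
    · rintro (h | ⟨t, ht, h⟩)
      · exact hYsub h
      · exact (Finset.sdiff_subset) (hval t ht h)
    · intro ha
      by_cases haY : a ∈ Y
      · exact Or.inl haY
      · have ha' : a ∈ (G.restrict (G.verts \ Y)).verts := by
          rw [AtomicHypergraph.restrict_verts _ _ (Finset.sdiff_subset)]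
          exact Finset.mem_sdiff.mpr ⟨ha, haY⟩
        obtain ⟨C, hC, haC⟩ := AtomicHypergraph.exists_component_mem ha'
        obtain ⟨t, ht, rfl⟩ := hcover C hC
        exact Or.inr ⟨t, ht, haC⟩

end ConstructLemmas
section ConstructLemmas2

set_option linter.unusedSectionVars false

variable {α : Type*} [LinearOrder α]

open FTree AtomicHypergraph

theorem IsConstruct.labels_nonempty {G : AtomicHypergraph α} {U : FTree α}
    (hU : IsConstruct G U) : ∀ X ∈ U.labels, X.Nonempty := by
  induction hU with
  | node Y ts hY hYsub hmem hcover hsorted hchild ih =>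
    intro X hX
    rcases FTree.mem_labels_node.mp hX with rfl | ⟨t, ht, hXt⟩
    · exact hY
    · exact ih t ht X hXt

theorem IsConstruct.child_support_subset_sdiff {G : AtomicHypergraph α} {Y : Finset α}
    {ts : List (FTree α)} (hU : IsConstruct G (FTree.node Y ts)) {t : FTree α} (ht : t ∈ ts) :
    t.support ⊆ G.verts \ Y := by
  cases hU with
  | node _ _ hY hYsub hmem hcover hsorted hchild =>
    have := (hmem t ht).subset
    rwa [AtomicHypergraph.restrict_verts _ _ Finset.sdiff_subset] at this

theorem IsConstruct.child_eq_of_support_eq {G : AtomicHypergraph α} {Y : Finset α}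
    {ts : List (FTree α)} (hU : IsConstruct G (FTree.node Y ts)) {t t' : FTree α}
    (ht : t ∈ ts) (ht' : t' ∈ ts) (h : t.support = t'.support) : t = t' := by
  cases hU with
  | node _ _ hY hYsub hmem hcover hsorted hchild =>
    by_contra hne
    have hsym : Symmetric (fun a b : FTree α =>
        a.support.max < b.support.max ∨ b.support.max < a.support.max) := by
      intro a b hab; exact hab.symm
    haveI : Std.Symm (fun a b : FTree α =>
        a.support.max < b.support.max ∨ b.support.max < a.support.max) := ⟨fun a b h => hsym h⟩
    have := List.Pairwise.forall (R := fun a b : FTree α =>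
        a.support.max < b.support.max ∨ b.support.max < a.support.max)
      (hsorted.imp (fun {a b} hab => Or.inl hab)) ht ht' hne
    rw [h] at this
    rcases this with h' | h' <;> exact lt_irrefl _ h'

theorem IsConstruct.child_eq_of_meet {G : AtomicHypergraph α} {Y : Finset α}
    {ts : List (FTree α)} (hU : IsConstruct G (FTree.node Y ts)) {t t' : FTree α}
    (ht : t ∈ ts) (ht' : t' ∈ ts) (h : (t.support ∩ t'.support).Nonempty) : t = t' := by
  have hcomp := by cases hU with
  | node _ _ hY hYsub hmem hcover hsorted hchild => exact hmem
  exact hU.child_eq_of_support_eq ht ht'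
    ((hcomp t ht).eq_of_meet (hcomp t' ht') h)

theorem IsConstruct.nests_to_subtree {G : AtomicHypergraph α} {U : FTree α}
    (hU : IsConstruct G U) : ∀ N ∈ U.nests, ∃ R, FTree.IsSubtree R U ∧ R.support = N := by
  induction hU with
  | node Y ts hY hYsub hmem hcover hsorted hchild ih =>
    intro N hN
    rcases FTree.mem_nests_node.mp hN with h | ⟨t, ht, hNt⟩
    · exact ⟨_, FTree.IsSubtree.refl _, h.symm⟩
    · obtain ⟨R, hR, hRs⟩ := ih t ht N hNt
      exact ⟨R, hR.trans (FTree.isSubtree_of_child ht), hRs⟩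

theorem IsConstruct.labels_to_subtree {G : AtomicHypergraph α} {U : FTree α}
    (hU : IsConstruct G U) : ∀ X ∈ U.labels, ∃ R, FTree.IsSubtree R U ∧ R.label = X := by
  induction hU with
  | node Y ts hY hYsub hmem hcover hsorted hchild ih =>
    intro X hX
    rcases FTree.mem_labels_node.mp hX with rfl | ⟨t, ht, hXt⟩
    · exact ⟨_, FTree.IsSubtree.refl _, rfl⟩
    · obtain ⟨R, hR, hRl⟩ := ih t ht X hXt
      exact ⟨R, hR.trans (FTree.isSubtree_of_child ht), hRl⟩

theorem IsConstruct.subtree_support_nonempty {G : AtomicHypergraph α} {U : FTree α}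
    (hU : IsConstruct G U) {R : FTree α} (hR : FTree.IsSubtree R U) : R.support.Nonempty := by
  have h1 : R.label.Nonempty := hU.labels_nonempty _ hR.label_mem
  exact h1.mono (FTree.label_subset_support R)

theorem IsConstruct.nest_nonempty {G : AtomicHypergraph α} {U : FTree α}
    (hU : IsConstruct G U) {N : Finset α} (hN : N ∈ U.nests) : N.Nonempty := by
  obtain ⟨R, hR, rfl⟩ := hU.nests_to_subtree N hN
  exact hU.subtree_support_nonempty hR

theorem IsConstruct.nest_subset {G : AtomicHypergraph α} {U : FTree α}
    (hU : IsConstruct G U) {N : Finset α} (hN : N ∈ U.nests) : N ⊆ G.verts := by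
  obtain ⟨R, hR, rfl⟩ := hU.nests_to_subtree N hN
  exact hU.support_eq_verts ▸ hR.support_subset

/-- Uniqueness: two subtrees whose labels share a vertex coincide. -/
theorem IsConstruct.subtree_eq_of_label_meet {G : AtomicHypergraph α} {U : FTree α}
    (hU : IsConstruct G U) : ∀ R R', FTree.IsSubtree R U → FTree.IsSubtree R' U →
      ∀ v, v ∈ R.label → v ∈ R'.label → R = R' := by
  induction hU with
  | node Y ts hY hYsub hmem hcover hsorted hchild ih =>
    rename_i G
    intro R R' hR hR' v hv hv'
    have hUc : IsConstruct G (FTree.node Y ts) :=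
      IsConstruct.node Y ts hY hYsub hmem hcover hsorted hchild
    have hsub : ∀ t ∈ ts, ∀ R₀ : FTree α, FTree.IsSubtree R₀ t → R₀.label ⊆ t.support := by
      intro t ht R₀ hR₀
      exact (FTree.label_subset_support R₀).trans hR₀.support_subset
    rcases hR.cases with rfl | ⟨t, ht, hRt⟩
    · rcases hR'.cases with rfl | ⟨t', ht', hRt'⟩
      · rfl
      · exfalso
        have h1 : v ∈ t'.support := hsub t' ht' R' hRt' hv'
        have h2 := hUc.child_support_subset_sdiff ht' h1
        exact (Finset.mem_sdiff.mp h2).2 hv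
    · rcases hR'.cases with rfl | ⟨t', ht', hRt'⟩
      · exfalso
        have h1 : v ∈ t.support := hsub t ht R hRt hv
        have h2 := hUc.child_support_subset_sdiff ht h1
        exact (Finset.mem_sdiff.mp h2).2 hv'
      · have htt : t = t' := hUc.child_eq_of_meet ht ht'
          ⟨v, Finset.mem_inter.mpr ⟨hsub t ht R hRt hv, hsub t' ht' R' hRt' hv'⟩⟩
        subst htt
        exact ih t ht R R' hRt hRt' v hv hv'

theorem IsConstruct.subtree_eq_of_label_eq {G : AtomicHypergraph α} {U : FTree α}
    (hU : IsConstruct G U) {R R' : FTree α} (hR : FTree.IsSubtree R U)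
    (hR' : FTree.IsSubtree R' U) (h : R.label = R'.label) : R = R' := by
  obtain ⟨v, hv⟩ := hU.labels_nonempty _ hR.label_mem
  exact hU.subtree_eq_of_label_meet R R' hR hR' v hv (h ▸ hv)

theorem IsConstruct.subtree_construct {G : AtomicHypergraph α} {U : FTree α}
    (hU : IsConstruct G U) : ∀ R, FTree.IsSubtree R U →
      IsConstruct (G.restrict R.support) R := by
  induction hU with
  | node Y ts hY hYsub hmem hcover hsorted hchild ih =>
    rename_i G
    intro R hR
    rcases hR.cases with rfl | ⟨t, ht, hRt⟩
    · have hUc : IsConstruct G (FTree.node Y ts) :=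
        IsConstruct.node Y ts hY hYsub hmem hcover hsorted hchild
      rw [hUc.support_eq_verts, AtomicHypergraph.restrict_self]
      exact hUc
    · have := ih t ht R hRt
      rwa [AtomicHypergraph.restrict_restrict _ hRt.support_subset] at this

theorem IsConstruct.subtreeAt_sound {G : AtomicHypergraph α} {U : FTree α}
    (hU : IsConstruct G U) : ∀ X R, U.subtreeAt X = some R →
      FTree.IsSubtree R U ∧ R.label = X := by
  induction hU with
  | node Y ts hY hYsub hmem hcover hsorted hchild ih =>
    intro X R h
    rw [FTree.subtreeAt] at h
    by_cases hYX : Y = X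
    · rw [if_pos hYX] at h
      cases h
      exact ⟨FTree.IsSubtree.refl _, hYX⟩
    · rw [if_neg hYX] at h
      obtain ⟨t, ht, h'⟩ := FTree.subtreeAtList_eq_some h
      obtain ⟨h1, h2⟩ := ih t ht X R h'
      exact ⟨h1.trans (FTree.isSubtree_of_child ht), h2⟩

theorem IsConstruct.subtreeAt_isSome {G : AtomicHypergraph α} {U : FTree α}
    (hU : IsConstruct G U) : ∀ X ∈ U.labels, (U.subtreeAt X).isSome := by
  induction hU with
  | node Y ts hY hYsub hmem hcover hsorted hchild ih =>
    intro X hX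
    rw [FTree.subtreeAt]
    by_cases hYX : Y = X
    · rw [if_pos hYX]; rfl
    · rw [if_neg hYX]
      rcases FTree.mem_labels_node.mp hX with h | ⟨t, ht, hXt⟩
      · exact absurd h.symm hYX
      · exact FTree.subtreeAtList_isSome ht (ih t ht X hXt)

theorem IsConstruct.suppAt_eq {G : AtomicHypergraph α} {U : FTree α}
    (hU : IsConstruct G U) {R : FTree α} (hR : FTree.IsSubtree R U) :
    U.suppAt R.label = R.support := by
  have h1 := hU.subtreeAt_isSome _ hR.label_mem
  obtain ⟨R₀, hR₀⟩ := Option.isSome_iff_exists.mp h1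
  obtain ⟨hR₀sub, hR₀lab⟩ := hU.subtreeAt_sound _ _ hR₀
  have : R₀ = R := hU.subtree_eq_of_label_eq hR₀sub hR hR₀lab
  subst this
  rw [FTree.suppAt, hR₀]
  rfl

end ConstructLemmas2
section ConstructLemmas3

set_option linter.unusedSectionVars false

variable {α : Type*} [LinearOrder α]

open FTree AtomicHypergraph

namespace FTree

/-- Union of all nests strictly nbelow `N`. -/
noncomputable def nbelow {α : Type*} [DecidableEq α] (U : FTree α) (N : Finset α) : Finset α :=
  (U.nestSet.filter (· ⊂ N)).sup id

/-- The ncell of a nest: the nest minus all strictly smaller nests. -/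
noncomputable def ncell {α : Type*} [DecidableEq α] (U : FTree α) (N : Finset α) : Finset α :=
  N \ U.nbelow N

theorem mem_nbelow {α : Type*} [DecidableEq α] {U : FTree α} {N : Finset α} {v : α} :
    v ∈ U.nbelow N ↔ ∃ M ∈ U.nests, M ⊂ N ∧ v ∈ M := by
  simp only [nbelow, Finset.mem_sup, Finset.mem_filter, id_eq, FTree.mem_nestSet]
  constructor
  · rintro ⟨M, ⟨h1, h2⟩, h3⟩; exact ⟨M, h1, h2, h3⟩
  · rintro ⟨M, h1, h2, h3⟩; exact ⟨M, ⟨h1, h2⟩, h3⟩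

theorem mem_ncell {α : Type*} [DecidableEq α] {U : FTree α} {N : Finset α} {v : α} :
    v ∈ U.ncell N ↔ v ∈ N ∧ ¬∃ M ∈ U.nests, M ⊂ N ∧ v ∈ M := by
  simp only [ncell, Finset.mem_sdiff, mem_nbelow]

end FTree

/-- Nests of `U` inside the support of a subtree `R` are nests of `R`. -/
theorem IsConstruct.nest_mem_subtree {G : AtomicHypergraph α} {U : FTree α}
    (hU : IsConstruct G U) : ∀ R, FTree.IsSubtree R U →
      ∀ N ∈ U.nests, N ⊆ R.support → N ∈ R.nests := by
  induction hU with
  | node Y ts hY hYsub hmem hcover hsorted hchild ih =>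
    rename_i G
    intro R hR N hN hNR
    have hUc : IsConstruct G (FTree.node Y ts) :=
      IsConstruct.node Y ts hY hYsub hmem hcover hsorted hchild
    -- root step: a nest inside a child's support is a nest of that child
    have root_step : ∀ t ∈ ts, N ⊆ t.support → N ∈ t.nests := by
      intro t ht hNt
      rcases FTree.mem_nests_node.mp hN with h | ⟨t', ht', hNt'⟩
      · exfalso
        obtain ⟨y0, hy0⟩ := hY
        have h1 : (FTree.node Y ts).support = G.verts := hUc.support_eq_verts
        have h2 : y0 ∈ N := by rw [h, h1]; exact hYsub hy0
        have h3 := hUc.child_support_subset_sdiff ht (hNt h2)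
        exact (Finset.mem_sdiff.mp h3).2 hy0
      · by_cases htt : t' = t
        · exact htt ▸ hNt'
        · exfalso
          have hne : N.Nonempty := (hchild t' ht').nest_nonempty hNt'
          have hNt'sub : N ⊆ t'.support := by
            obtain ⟨R', hR', rfl⟩ := (hchild t' ht').nests_to_subtree N hNt'
            exact hR'.support_subset
          obtain ⟨v, hv⟩ := hne
          have : t' = t := hUc.child_eq_of_meet ht' ht
            ⟨v, Finset.mem_inter.mpr ⟨hNt'sub hv, hNt hv⟩⟩
          exact htt this
    rcases hR.cases with rfl | ⟨t, ht, hRt⟩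
    · exact hN
    · have h1 : N ⊆ t.support := hNR.trans hRt.support_subset
      exact ih t ht R hRt N (root_step t ht h1) hNR

/-- Laminarity of the nested set of a construct. -/
theorem IsConstruct.laminar {G : AtomicHypergraph α} {U : FTree α}
    (hU : IsConstruct G U) : ∀ N ∈ U.nests, ∀ M ∈ U.nests,
      N ⊆ M ∨ M ⊆ N ∨ Disjoint N M := by
  induction hU with
  | node Y ts hY hYsub hmem hcover hsorted hchild ih =>
    rename_i G
    intro N hN M hM
    have hUc : IsConstruct G (FTree.node Y ts) :=
      IsConstruct.node Y ts hY hYsub hmem hcover hsorted hchild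
    have hsupN := hUc.nest_subset hN
    have hsupM := hUc.nest_subset hM
    rcases FTree.mem_nests_node.mp hN with h | ⟨t, ht, hNt⟩
    · right; left; rw [h, hUc.support_eq_verts]; exact hsupM
    rcases FTree.mem_nests_node.mp hM with h | ⟨t', ht', hMt'⟩
    · left; rw [h, hUc.support_eq_verts]; exact hsupN
    by_cases htt : t = t'
    · exact ih t ht N hNt M (htt ▸ hMt')
    · right; right
      have hNsub : N ⊆ t.support := by
        obtain ⟨R', hR', rfl⟩ := (hchild t ht).nests_to_subtree N hNt
        exact hR'.support_subset
      have hMsub : M ⊆ t'.support := by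
        obtain ⟨R', hR', rfl⟩ := (hchild t' ht').nests_to_subtree M hMt'
        exact hR'.support_subset
      rw [Finset.disjoint_left]
      intro v hvN hvM
      exact htt (hUc.child_eq_of_meet ht ht'
        ⟨v, Finset.mem_inter.mpr ⟨hNsub hvN, hMsub hvM⟩⟩)

/-- The ncell of a subtree's support is its label. -/
theorem IsConstruct.cell_eq_label {G : AtomicHypergraph α} {U : FTree α}
    (hU : IsConstruct G U) {R : FTree α} (hR : FTree.IsSubtree R U) :
    U.ncell R.support = R.label := by
  have hRc := hU.subtree_construct R hR
  ext v
  rw [FTree.mem_ncell]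
  obtain ⟨X, ts, rfl⟩ : ∃ X ts, R = FTree.node X ts := by
    cases R with | node X ts => exact ⟨X, ts, rfl⟩
  have hXne : X.Nonempty := by cases hRc with | node _ _ hY _ _ _ _ _ => exact hY
  constructor
  · rintro ⟨hv, hnb⟩
    rcases FTree.mem_support_node.mp hv with h | ⟨t, ht, h⟩
    · exact h
    · exfalso
      apply hnb
      refine ⟨t.support, FTree.mem_nests_of_subtree hR
        (FTree.isSubtree_of_child (by exact ht)).support_mem_nests, ?_, h⟩
      constructor
      · exact FTree.child_support_subset (by exact ht)
      · intro hcon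
        obtain ⟨y0, hy0⟩ := hXne
        have h1 : y0 ∈ (FTree.node X ts).support :=
          FTree.label_subset_support _ (by exact hy0)
        have h2 := hRc.child_support_subset_sdiff (t := t) ht (hcon h1)
        have h3 : y0 ∈ (G.restrict ((FTree.node X ts).support)).verts \ X := h2
        exact (Finset.mem_sdiff.mp h3).2 hy0
  · intro hvX
    refine ⟨FTree.label_subset_support _ hvX, ?_⟩
    rintro ⟨M, hM, hMss, hvM⟩
    -- M is a nest of R, so the support of a subtree R'' of R, R'' ≠ R
    have hMR : M ∈ (FTree.node X ts).nests :=
      hU.nest_mem_subtree _ hR M hM hMss.subset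
    obtain ⟨R'', hR'', rfl⟩ := hRc.nests_to_subtree M hMR
    rcases hR''.cases with rfl | ⟨t, ht, hR''t⟩
    · exact absurd rfl hMss.ne
    · have h1 : R''.support ⊆ t.support := hR''t.support_subset
      have h2 := hRc.child_support_subset_sdiff (t := t) ht (h1 hvM)
      exact (Finset.mem_sdiff.mp h2).2 hvX

/-- Every vertex of the support lies in the label of some subtree. -/
theorem IsConstruct.exists_subtree_label_mem {G : AtomicHypergraph α} {U : FTree α}
    (hU : IsConstruct G U) : ∀ v ∈ U.support, ∃ R, FTree.IsSubtree R U ∧ v ∈ R.label := by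
  induction hU with
  | node Y ts hY hYsub hmem hcover hsorted hchild ih =>
    intro v hv
    rcases FTree.mem_support_node.mp hv with h | ⟨t, ht, h⟩
    · exact ⟨_, FTree.IsSubtree.refl _, h⟩
    · obtain ⟨R, hR, hvR⟩ := ih t ht v h
      exact ⟨R, hR.trans (FTree.isSubtree_of_child ht), hvR⟩

/-- Subtree supports of a construct over a connected hypergraph are connected. -/
theorem IsConstruct.subtree_connected {G : AtomicHypergraph α} {U : FTree α}
    (hU : IsConstruct G U) (hGc : G.Connected) {R : FTree α} (hR : FTree.IsSubtree R U) :
    (G.restrict R.support).Connected := by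
  induction hU with
  | node Y ts hY hYsub hmem hcover hsorted hchild ih =>
    rename_i G
    rcases hR.cases with rfl | ⟨t, ht, hRt⟩
    · have hUc : IsConstruct G (FTree.node Y ts) :=
        IsConstruct.node Y ts hY hYsub hmem hcover hsorted hchild
      rw [hUc.support_eq_verts, AtomicHypergraph.restrict_self]
      exact hGc
    · have hts : t.support ⊆ G.verts \ Y := by
        have := (hmem t ht).subset
        rwa [AtomicHypergraph.restrict_verts _ _ Finset.sdiff_subset] at this
      have htc : (G.restrict t.support).Connected := by
        have := (hmem t ht).2.1
        rwa [AtomicHypergraph.restrict_restrict _ hts] at this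
      have := ih t ht htc hRt
      rwa [AtomicHypergraph.restrict_restrict _ hRt.support_subset] at this

end ConstructLemmas3
section Injectivity

set_option linter.unusedSectionVars false

variable {α : Type*} [LinearOrder α]

open FTree AtomicHypergraph

theorem FTree.ncell_congr {α : Type*} [DecidableEq α] {U U' : FTree α}
    (h : U.nestSet = U'.nestSet) (N : Finset α) : U.ncell N = U'.ncell N := by
  rw [FTree.ncell, FTree.ncell, FTree.nbelow, FTree.nbelow, h]

theorem IsConstruct.ncell_support {G : AtomicHypergraph α} {U : FTree α}
    (hU : IsConstruct G U) : U.ncell U.support = U.label :=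
  hU.cell_eq_label (FTree.IsSubtree.refl U)

theorem IsConstruct.child_nestSet {G : AtomicHypergraph α} {Y : Finset α} {ts : List (FTree α)}
    (hU : IsConstruct G (FTree.node Y ts)) {t : FTree α} (ht : t ∈ ts) :
    t.nestSet = (FTree.node Y ts).nestSet.filter (· ⊆ t.support) := by
  have hchild : ∀ u ∈ ts, IsConstruct (G.restrict u.support) u := by
    cases hU with | node _ _ _ _ _ _ _ hc => exact hc
  ext N
  rw [Finset.mem_filter, FTree.mem_nestSet, FTree.mem_nestSet]
  constructor
  · intro hN
    refine ⟨FTree.mem_nests_of_subtree (FTree.isSubtree_of_child (by exact ht)) hN, ?_⟩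
    obtain ⟨R, hR, rfl⟩ := (hchild t ht).nests_to_subtree N hN
    exact hR.support_subset
  · rintro ⟨hN, hNs⟩
    exact hU.nest_mem_subtree t (FTree.isSubtree_of_child (by exact ht)) N hN hNs

/-- A construct is determined by its nested set. -/
theorem IsConstruct.eq_of_nestSet_eq {G : AtomicHypergraph α} {U : FTree α}
    (hU : IsConstruct G U) : ∀ U', IsConstruct G U' → U.nestSet = U'.nestSet → U = U' := by
  induction hU with
  | node Y ts hY hYsub hmem hcover hsorted hchild ih =>
    rename_i G
    intro U' hU' hns
    obtain ⟨Y', ts', rfl⟩ : ∃ Y' ts', U' = FTree.node Y' ts' := by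
      cases U' with | node Y' ts' => exact ⟨Y', ts', rfl⟩
    have hUc : IsConstruct G (FTree.node Y ts) :=
      IsConstruct.node Y ts hY hYsub hmem hcover hsorted hchild
    have hmem' : ∀ t ∈ ts', (G.restrict (G.verts \ Y')).IsComponent t.support := by
      cases hU' with | node _ _ _ _ hm _ _ _ => exact hm
    have hcover' : ∀ C, (G.restrict (G.verts \ Y')).IsComponent C → ∃ t ∈ ts', t.support = C := by
      cases hU' with | node _ _ _ _ _ hc _ _ => exact hc
    have hsorted' : ts'.Pairwise fun a b => a.support.max < b.support.max := by
      cases hU' with | node _ _ _ _ _ _ hs _ => exact hs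
    have hchild' : ∀ t ∈ ts', IsConstruct (G.restrict t.support) t := by
      cases hU' with | node _ _ _ _ _ _ _ hc => exact hc
    -- roots agree
    have hYY : Y = Y' := by
      have h1 := hUc.ncell_support
      have h2 := hU'.ncell_support
      rw [hUc.support_eq_verts] at h1
      rw [hU'.support_eq_verts] at h2
      rw [FTree.ncell_congr hns] at h1
      rw [h2] at h1
      exact h1.symm
    subst hYY
    -- support lists agree
    have hmapeq : ts.map FTree.support = ts'.map FTree.support := by
      have hr : IsAntisymm (Finset α) (fun a b => a.max < b.max) :=
        ⟨fun a b h h' => absurd (h.trans h') (lt_irrefl _)⟩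
      have hs₁ : (ts.map FTree.support).Pairwise (fun a b => a.max < b.max) :=
        List.pairwise_map.mpr hsorted
      have hs₂ : (ts'.map FTree.support).Pairwise (fun a b => a.max < b.max) :=
        List.pairwise_map.mpr hsorted'
      have hnd₁ : (ts.map FTree.support).Nodup :=
        hs₁.imp (fun {a b} h => ne_of_apply_ne Finset.max (ne_of_lt h))
      have hnd₂ : (ts'.map FTree.support).Nodup :=
        hs₂.imp (fun {a b} h => ne_of_apply_ne Finset.max (ne_of_lt h))
      have hmemiff : ∀ C, C ∈ ts.map FTree.support ↔ C ∈ ts'.map FTree.support := by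
        intro C
        simp only [List.mem_map]
        constructor
        · rintro ⟨t, ht, rfl⟩
          obtain ⟨t', ht', h⟩ := hcover' _ (hmem t ht)
          exact ⟨t', ht', h⟩
        · rintro ⟨t, ht, rfl⟩
          obtain ⟨t', ht', h⟩ := hcover _ (hmem' t ht)
          exact ⟨t', ht', h⟩
      have hperm := List.perm_of_nodup_nodup_toFinset_eq hnd₁ hnd₂
        (by ext C; simp only [List.mem_toFinset]; exact hmemiff C)
      exact List.Perm.eq_of_pairwise (fun a b _ _ h h' => absurd (h.trans h') (lt_irrefl _)) hs₁ hs₂ hperm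
    have hlen : ts.length = ts'.length := by
      have := congrArg List.length hmapeq
      simpa using this
    have : ts = ts' := by
      apply List.ext_getElem hlen
      intro i h₁ h₂
      have hti : ts[i] ∈ ts := List.getElem_mem _
      have hti' : ts'[i] ∈ ts' := List.getElem_mem _
      have hsupeq : ts[i].support = ts'[i].support := by
        have h3 : (ts.map FTree.support)[i]'(by simpa using h₁) =
            (ts'.map FTree.support)[i]'(by simpa using h₂) := by
          simp only [hmapeq]
        simpa using h3
      have hnseq : ts[i].nestSet = ts'[i].nestSet := by
        rw [hUc.child_nestSet hti, hU'.child_nestSet hti', hns, hsupeq]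
      have hc' : IsConstruct (G.restrict ts[i].support) ts'[i] := by
        rw [hsupeq]; exact hchild' _ hti'
      exact ih _ hti _ hc' hnseq
    rw [this]

end Injectivity
section Extract

set_option linter.unusedSectionVars false
set_option maxHeartbeats 1000000

variable {α : Type*} [LinearOrder α]

open FTree AtomicHypergraph

theorem Finset.eq_singleton_of_card_one {β : Type*} {X : Finset β} {w : β}
    (h : X.card = 1) (hw : w ∈ X) : X = {w} := by
  obtain ⟨a, rfl⟩ := Finset.card_eq_one.mp h
  rw [Finset.mem_singleton.mp hw]

theorem FTree.exists_parent {α : Type*} {R U : FTree α} (h : FTree.IsSubtree R U) :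
    R = U ∨ ∃ P, FTree.IsSubtree P U ∧ R ∈ P.children := by
  induction h with
  | refl => exact Or.inl rfl
  | child h₁ h₂ ih =>
    rcases ih with rfl | ⟨P, hP, hRP⟩
    · exact Or.inr ⟨_, FTree.IsSubtree.refl _, h₂⟩
    · exact Or.inr ⟨P, hP.trans (FTree.isSubtree_of_child h₂), hRP⟩

/-- From `ParentChild {x} {y}` : the subtree at `y` is strictly inside the subtree at `x`. -/
theorem parentChild_suppAt_ssubset {H : AtomicHypergraph α} {S : FTree α} {x y : α}
    (hS : IsConstruct H S) (hpar : FTree.ParentChild ({x} : Finset α) ({y} : Finset α) S) :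
    S.suppAt {y} ⊂ S.suppAt {x} := by
  obtain ⟨R, hRsub, hRlab, t, ht, htlab⟩ := hpar
  have htsub : FTree.IsSubtree t S := (FTree.isSubtree_of_child ht).trans hRsub
  have h1 : S.suppAt {x} = R.support := by rw [← hRlab]; exact hS.suppAt_eq hRsub
  have h2 : S.suppAt {y} = t.support := by rw [← htlab]; exact hS.suppAt_eq htsub
  rw [h1, h2]
  have hRc := hS.subtree_construct R hRsub
  obtain ⟨X, ss, rfl⟩ : ∃ X ss, R = FTree.node X ss := by
    cases R with | node X ss => exact ⟨X, ss, rfl⟩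
  have hXx : X = {x} := hRlab
  have hts : t.support ⊆ (H.restrict (FTree.node X ss).support).verts \ X :=
    hRc.child_support_subset_sdiff ht
  have hverts : (H.restrict (FTree.node X ss).support).verts = (FTree.node X ss).support :=
    AtomicHypergraph.restrict_verts _ _ (hS.support_eq_verts ▸ hRsub.support_subset)
  rw [hverts] at hts
  constructor
  · intro a ha
    exact (Finset.mem_sdiff.mp (hts ha)).1
  · intro hcon
    have hx : x ∈ (FTree.node X ss).support := by
      apply FTree.label_subset_support
      rw [show (FTree.node X ss).label = X from rfl, hXx]
      exact Finset.mem_singleton_self x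
    have := hts (hcon hx)
    rw [hXx] at this
    exact (Finset.mem_sdiff.mp this).2 (Finset.mem_singleton_self x)

/-- Cells of the covering construct vs the covered one. -/
theorem ncell_insert_of_not_lt {α : Type*} [DecidableEq α] {V W : FTree α} {N : Finset α}
    (hWset : W.nestSet = insert N V.nestSet) {M : Finset α} (h : ¬N ⊂ M) :
    W.ncell M = V.ncell M := by
  rw [FTree.ncell, FTree.ncell, FTree.nbelow, FTree.nbelow, hWset, Finset.filter_insert,
    if_neg h]

theorem ncell_insert_of_lt {α : Type*} [DecidableEq α] {V W : FTree α} {N : Finset α}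
    (hWset : W.nestSet = insert N V.nestSet) {M : Finset α} (h : N ⊂ M) :
    W.ncell M = V.ncell M \ N := by
  rw [FTree.ncell, FTree.ncell, FTree.nbelow, FTree.nbelow, hWset, Finset.filter_insert,
    if_pos h, Finset.sup_insert, id_eq, Finset.sup_eq_union]
  ext a
  simp only [Finset.mem_sdiff, Finset.mem_union]
  tauto

theorem ncell_insert_subset {α : Type*} [DecidableEq α] {V W : FTree α} {N : Finset α}
    (hWset : W.nestSet = insert N V.nestSet) (M : Finset α) :
    W.ncell M ⊆ V.ncell M := by
  have hb : V.nbelow M ⊆ W.nbelow M := by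
    rw [FTree.nbelow, FTree.nbelow, hWset]
    exact Finset.le_iff_subset.mp
      (Finset.sup_mono (Finset.filter_subset_filter _ (Finset.subset_insert _ _)))
  exact Finset.sdiff_subset_sdiff subset_rfl hb

end Extract

section MoreConstruct
set_option linter.unusedSectionVars false
variable {α : Type*} [LinearOrder α]

theorem IsConstruct.child_component {G : AtomicHypergraph α} {P : FTree α}
    (hP : IsConstruct G P) {t : FTree α} (ht : t ∈ P.children) :
    (G.restrict (G.verts \ P.label)).IsComponent t.support := by
  cases hP with
  | node Y ts hY hYsub hmem hcover hsorted hchild => exact hmem t ht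

end MoreConstruct
section ExtractCase

set_option linter.unusedSectionVars false
set_option maxHeartbeats 1000000

variable {α : Type*} [LinearOrder α]

open FTree AtomicHypergraph

theorem extract_case {H : AtomicHypergraph α} {V W : FTree α} {N K : Finset α} {x y : α}
    (hW : IsConstruct H W) (hV : IsConstruct H V)
    (hWset : W.nestSet = insert N V.nestSet) (hNnotV : N ∉ V.nestSet)
    (hKV : K ∈ V.nestSet) (hKconn : (H.restrict K).Connected)
    (hNK : N ⊂ K)
    (hminK : ∀ M' ∈ V.nestSet, N ⊂ M' → K ⊆ M')
    (hcellN : W.ncell N = {y}) (hcellK : W.ncell K = {x}) :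
    W.suppAt {y} = N ∧ W.suppAt {x} = K ∧ (H.restrict (K \ {x})).IsComponent N := by
  have hNW : N ∈ W.nestSet := by rw [hWset]; exact Finset.mem_insert_self _ _
  have hKW : K ∈ W.nestSet := by rw [hWset]; exact Finset.mem_insert_of_mem hKV
  obtain ⟨R_N, hR_N, hR_Nsup⟩ := hW.nests_to_subtree N (FTree.mem_nestSet.mp hNW)
  obtain ⟨R_K, hR_K, hR_Ksup⟩ := hW.nests_to_subtree K (FTree.mem_nestSet.mp hKW)
  have labN : R_N.label = {y} := by
    rw [← hcellN, ← hR_Nsup, hW.cell_eq_label hR_N]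
  have labK : R_K.label = {x} := by
    rw [← hcellK, ← hR_Ksup, hW.cell_eq_label hR_K]
  have suppy : W.suppAt {y} = N := by
    rw [← labN, hW.suppAt_eq hR_N, hR_Nsup]
  have suppx : W.suppAt {x} = K := by
    rw [← labK, hW.suppAt_eq hR_K, hR_Ksup]
  -- the parent of the node at N
  have hKverts : K ⊆ H.verts := hV.nest_subset (FTree.mem_nestSet.mp hKV)
  have hRNne : R_N ≠ W := by
    intro hcon
    have : N = W.support := by rw [← hR_Nsup, hcon]
    rw [hW.support_eq_verts] at this
    exact hNK.not_subset (this ▸ hKverts)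
  rcases FTree.exists_parent hR_N with hcon | ⟨P, hPsub, hchildP⟩
  · exact absurd hcon hRNne
  have hPc := hW.subtree_construct P hPsub
  have hPsupH : P.support ⊆ H.verts := hW.support_eq_verts ▸ hPsub.support_subset
  have hPverts : (H.restrict P.support).verts = P.support :=
    AtomicHypergraph.restrict_verts _ _ hPsupH
  set Z := P.label with hZdef
  have hZcell : Z = W.ncell P.support := (hW.cell_eq_label hPsub).symm
  have hcomp0 : ((H.restrict P.support).restrict
      ((H.restrict P.support).verts \ Z)).IsComponent R_N.support :=
    hPc.child_component hchildP
  rw [hPverts, AtomicHypergraph.restrict_restrict _ Finset.sdiff_subset, hR_Nsup] at hcomp0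
  -- N is strictly inside P.support
  have hNPZ : N ⊆ P.support \ Z := by
    have := hcomp0.subset
    rwa [AtomicHypergraph.restrict_verts _ _ ((Finset.sdiff_subset).trans hPsupH)] at this
  have hZne : Z.Nonempty := hW.labels_nonempty _ hPsub.label_mem
  obtain ⟨z, hz⟩ := hZne
  have hNP : N ⊂ P.support := by
    constructor
    · exact hNPZ.trans Finset.sdiff_subset
    · intro hcon
      have hzP : z ∈ P.support := FTree.label_subset_support P hz
      exact (Finset.mem_sdiff.mp (hNPZ (hcon hzP))).2 hz
  have hPV : P.support ∈ V.nestSet := by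
    have h1 : P.support ∈ W.nestSet := FTree.mem_nestSet.mpr hPsub.support_mem_nests
    rw [hWset] at h1
    rcases Finset.mem_insert.mp h1 with h | h
    · exact absurd (h ▸ hNP) (lt_irrefl _)
    · exact h
  have hKP : K ⊆ P.support := hminK _ hPV hNP
  have hPK : P.support = K := by
    by_contra hne
    have hKPs : K ⊂ P.support := Finset.ssubset_iff_subset_ne.mpr ⟨hKP, fun h => hne h.symm⟩
    -- Z is disjoint from K
    have hZK : ∀ a ∈ Z, a ∉ K := by
      intro a ha hK
      have h1 : a ∈ V.ncell P.support := ncell_insert_subset hWset P.support (hZcell ▸ ha)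
      rw [FTree.mem_ncell] at h1
      exact h1.2 ⟨K, FTree.mem_nestSet.mp hKV, hKPs, hK⟩
    have hKsub : K ⊆ P.support \ Z := by
      intro a ha
      exact Finset.mem_sdiff.mpr ⟨hKP ha, fun h => hZK a h ha⟩
    have hKG₀ : K ⊆ (H.restrict (P.support \ Z)).verts := by
      rwa [AtomicHypergraph.restrict_verts _ _ (Finset.sdiff_subset.trans hPsupH)]
    have hKconn₀ : ((H.restrict (P.support \ Z)).restrict K).Connected := by
      rwa [AtomicHypergraph.restrict_restrict _ hKsub]
    obtain ⟨C, hC, hKC⟩ := AtomicHypergraph.exists_component hKG₀ hKconn₀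
    obtain ⟨n₀, hn₀⟩ := hW.nest_nonempty (FTree.mem_nestSet.mp hNW)
    have hCN : C = N := hC.eq_of_meet hcomp0
      ⟨n₀, Finset.mem_inter.mpr ⟨hKC (hNK.subset hn₀), hn₀⟩⟩
    exact hNK.not_subset (hCN ▸ hKC)
  rw [hPK] at hcomp0 hZcell
  rw [hcellK] at hZcell
  rw [hZcell] at hcomp0
  exact ⟨suppy, suppx, hcomp0⟩

end ExtractCase
section ExtractCore

set_option linter.unusedSectionVars false
set_option maxHeartbeats 1000000

variable {α : Type*} [LinearOrder α]

open FTree AtomicHypergraph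

theorem extract_core {H : AtomicHypergraph α} {V W : FTree α} {x y : α}
    (hW : IsConstruct H W) (hW1 : ∀ X ∈ W.labels, X.card = 1)
    (hV : IsConstruct H V) (hdim : V.dim = 1) (hxy : x ≠ y)
    (hnode : ({x, y} : Finset α) ∈ V.labels) (hWV : FTree.CoveredBy W V) :
    ∃ N : Finset α, W.nestSet = insert N V.nestSet ∧ N ∉ V.nestSet ∧
      N ⊂ V.suppAt {x, y} ∧
      (∀ M' ∈ V.nestSet, N ⊂ M' → V.suppAt {x, y} ⊆ M') ∧
      (W.ncell N ⊆ {x, y}) ∧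
      ((W.ncell N = {y} ∧ W.ncell (V.suppAt {x, y}) = {x} ∧ y ∈ N ∧ x ∉ N) ∨
       (W.ncell N = {x} ∧ W.ncell (V.suppAt {x, y}) = {y} ∧ x ∈ N ∧ y ∉ N)) := by
  classical
  obtain ⟨R_V, hR_V, hR_Vlab⟩ := hV.labels_to_subtree _ hnode
  set K := R_V.support with hKdef
  have hKsupp : V.suppAt {x, y} = K := by rw [← hR_Vlab]; exact hV.suppAt_eq hR_V
  have hcellVK : V.ncell K = {x, y} := by rw [hV.cell_eq_label hR_V, hR_Vlab]
  have hKV : K ∈ V.nestSet := FTree.mem_nestSet.mpr hR_V.support_mem_nests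
  obtain ⟨N, hNmem, hNne, hVset⟩ := hWV
  have hNW : N ∈ W.nestSet := FTree.mem_nestSet.mpr hNmem
  have hNnotV : N ∉ V.nestSet := by rw [hVset]; exact Finset.notMem_erase _ _
  have hWset : W.nestSet = insert N V.nestSet := by
    rw [hVset, Finset.insert_erase hNW]
  -- labels of V other than {x,y} are singletons
  have hVlab1 : ∀ X ∈ V.labels, X ≠ ({x, y} : Finset α) → X.card = 1 := by
    intro X hX hXne
    have hcard2 : ({x, y} : Finset α).card = 2 := Finset.card_pair hxy
    obtain ⟨l₁, l₂, hl⟩ := List.append_of_mem hnode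
    have hsum : V.dim = ((l₁.map fun X => X.card - 1).sum +
        (1 + (l₂.map fun X => X.card - 1).sum)) := by
      rw [FTree.dim, hl]
      simp [hcard2]
    rw [hdim] at hsum
    have h₁0 : (l₁.map fun X => X.card - 1).sum = 0 := by omega
    have h₂0 : (l₂.map fun X => X.card - 1).sum = 0 := by omega
    have hX10 : X.card - 1 = 0 := by
      have hX' : X ∈ l₁ ∨ X ∈ l₂ := by
        have := hl ▸ hX
        rcases List.mem_append.mp this with h | h
        · exact Or.inl h
        · rcases List.mem_cons.mp h with h' | h'
          · exact absurd h' hXne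
          · exact Or.inr h'
      rcases hX' with h | h
      · exact List.sum_eq_zero_iff.mp h₁0 _ (List.mem_map_of_mem h)
      · exact List.sum_eq_zero_iff.mp h₂0 _ (List.mem_map_of_mem h)
    have hpos : 0 < X.card := Finset.card_pos.mpr (hV.labels_nonempty X hX)
    omega
  have hVcell1 : ∀ M ∈ V.nestSet, M ≠ K → (V.ncell M).card = 1 := by
    intro M hM hMK
    obtain ⟨R_M, hR_M, rfl⟩ := hV.nests_to_subtree M (FTree.mem_nestSet.mp hM)
    rw [hV.cell_eq_label hR_M]
    refine hVlab1 _ hR_M.label_mem ?_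
    intro hcon
    exact hMK (congrArg FTree.support (hV.subtree_eq_of_label_eq hR_M hR_V (hcon.trans hR_Vlab.symm)))
  -- the set of V-nests strictly containing N, and its minimum M₀
  have hNsubH : N ⊆ H.verts := hW.nest_subset hNmem
  have hNverts : N ⊂ H.verts := by
    refine Finset.ssubset_iff_subset_ne.mpr ⟨hNsubH, ?_⟩
    intro h
    exact hNne (h.trans hW.support_eq_verts.symm)
  have hNnonempty : N.Nonempty := hW.nest_nonempty hNmem
  set 𝒞 := V.nestSet.filter (N ⊂ ·) with h𝒞
  have h𝒞ne : 𝒞.Nonempty := by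
    refine ⟨H.verts, Finset.mem_filter.mpr ⟨?_, hNverts⟩⟩
    have := FTree.mem_nestSet.mpr (FTree.IsSubtree.refl V).support_mem_nests
    rwa [hV.support_eq_verts] at this
  obtain ⟨M₀, hM₀, hM₀min⟩ := Finset.exists_min_image 𝒞 Finset.card h𝒞ne
  have hM₀V : M₀ ∈ V.nestSet := (Finset.mem_filter.mp hM₀).1
  have hNM₀ : N ⊂ M₀ := (Finset.mem_filter.mp hM₀).2
  have hmin : ∀ M' ∈ 𝒞, M₀ ⊆ M' := by
    intro M' hM'
    have hM'V : M' ∈ V.nestSet := (Finset.mem_filter.mp hM').1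
    have hNM' : N ⊂ M' := (Finset.mem_filter.mp hM').2
    rcases hV.laminar M₀ (FTree.mem_nestSet.mp hM₀V) M' (FTree.mem_nestSet.mp hM'V) with
      h | h | h
    · exact h
    · rw [Finset.eq_of_subset_of_card_le h (hM₀min M' hM')]
    · exfalso
      obtain ⟨n₀, hn₀⟩ := hNnonempty
      exact Finset.disjoint_left.mp h (hNM₀.subset hn₀) (hNM'.subset hn₀)
  -- the label at N in W
  obtain ⟨R_NW, hR_NW, hR_NWsup⟩ := hW.nests_to_subtree N hNmem
  have hcellNlab : W.ncell N = R_NW.label := by rw [← hR_NWsup, hW.cell_eq_label hR_NW]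
  have hcellNcard : (W.ncell N).card = 1 := by rw [hcellNlab]; exact hW1 _ hR_NW.label_mem
  have hcellNne : (W.ncell N).Nonempty := by
    rw [hcellNlab]; exact hW.labels_nonempty _ hR_NW.label_mem
  -- key: elements of the W-cell at N lie in the V-cell at M₀
  have keyA : ∀ v ∈ W.ncell N, v ∈ V.ncell M₀ := by
    intro v hv
    have hvN : v ∈ N := (FTree.mem_ncell.mp hv).1
    obtain ⟨R', hR', hvlab⟩ := hV.exists_subtree_label_mem v
      (by rw [hV.support_eq_verts]; exact hNsubH hvN)
    have hM'V : R'.support ∈ V.nestSet := FTree.mem_nestSet.mpr hR'.support_mem_nests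
    have hvcell : v ∈ V.ncell R'.support := by
      rw [hV.cell_eq_label hR']; exact hvlab
    have hM'W : R'.support ∈ W.nests := by
      rw [← FTree.mem_nestSet, hWset]; exact Finset.mem_insert_of_mem hM'V
    have hvM' : v ∈ R'.support := FTree.label_subset_support R' hvlab
    rcases hW.laminar N hNmem R'.support hM'W with h | h | h
    · -- N ⊆ R'.support
      have hNR' : N ⊂ R'.support :=
        Finset.ssubset_iff_subset_ne.mpr ⟨h, fun hc => hNnotV (hc ▸ hM'V)⟩
      have hR'𝒞 : R'.support ∈ 𝒞 := Finset.mem_filter.mpr ⟨hM'V, hNR'⟩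
      have hM₀R' : M₀ ⊆ R'.support := hmin _ hR'𝒞
      by_cases hM₀eq : M₀ = R'.support
      · rwa [hM₀eq]
      · exfalso
        have : M₀ ⊂ R'.support := Finset.ssubset_iff_subset_ne.mpr ⟨hM₀R', hM₀eq⟩
        exact (FTree.mem_ncell.mp hvcell).2
          ⟨M₀, FTree.mem_nestSet.mp hM₀V, this, hNM₀.subset hvN⟩
    · -- R'.support ⊆ N
      exfalso
      have hne : R'.support ≠ N := fun hc => hNnotV (hc ▸ hM'V)
      exact (FTree.mem_ncell.mp hv).2
        ⟨R'.support, FTree.mem_nestSet.mp (hWset ▸ Finset.mem_insert_of_mem hM'V),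
          Finset.ssubset_iff_subset_ne.mpr ⟨h, hne⟩, hvM'⟩
    · exact absurd (Finset.disjoint_left.mp h hvN hvM') (fun hc => hc)
  -- M₀ = K
  have hM₀K : M₀ = K := by
    by_contra hMK
    have hc1 : (V.ncell M₀).card = 1 := hVcell1 _ hM₀V hMK
    obtain ⟨m, hm⟩ := Finset.card_eq_one.mp hc1
    obtain ⟨v, hv⟩ := hcellNne
    have hvm : v = m := by
      have := keyA v hv
      rw [hm] at this
      exact Finset.mem_singleton.mp this
    subst hvm
    have hcellNeq : W.ncell N = {v} := Finset.eq_singleton_of_card_one hcellNcard hv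
    -- the cell of M₀ in W
    have hM₀W : M₀ ∈ W.nests := by
      rw [← FTree.mem_nestSet, hWset]; exact Finset.mem_insert_of_mem hM₀V
    obtain ⟨R_M₀, hR_M₀, hR_M₀sup⟩ := hW.nests_to_subtree M₀ hM₀W
    have hcellM₀lab : W.ncell M₀ = R_M₀.label := by
      rw [← hR_M₀sup, hW.cell_eq_label hR_M₀]
    have hcellM₀ : W.ncell M₀ = ({v} : Finset α) \ N := by
      rw [ncell_insert_of_lt hWset hNM₀, hm]
    have hcellM₀ne : (W.ncell M₀).Nonempty := by
      rw [hcellM₀lab]; exact hW.labels_nonempty _ hR_M₀.label_mem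
    have hmN : v ∉ N := by
      intro hc
      rw [hcellM₀] at hcellM₀ne
      obtain ⟨a, ha⟩ := hcellM₀ne
      rw [Finset.mem_sdiff, Finset.mem_singleton] at ha
      exact ha.2 (ha.1 ▸ hc)
    have hcellM₀eq : W.ncell M₀ = ({v} : Finset α) := by
      rw [hcellM₀]
      ext a
      simp only [Finset.mem_sdiff, Finset.mem_singleton]
      constructor
      · exact fun h => h.1
      · rintro rfl; exact ⟨rfl, hmN⟩
    have : R_NW = R_M₀ := hW.subtree_eq_of_label_eq hR_NW hR_M₀
      (by rw [← hcellNlab, ← hcellM₀lab, hcellNeq, hcellM₀eq])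
    have : N = M₀ := by rw [← hR_NWsup, ← hR_M₀sup, this]
    exact hNM₀.ne this
  subst hM₀K
  have hminK : ∀ M' ∈ V.nestSet, N ⊂ M' → K ⊆ M' := by
    intro M' hM' hNM'
    exact hmin M' (Finset.mem_filter.mpr ⟨hM', hNM'⟩)
  -- the W-cell at K
  have hcellWK : W.ncell K = ({x, y} : Finset α) \ N := by
    rw [ncell_insert_of_lt hWset hNM₀, hcellVK]
  have hcellWKne : (W.ncell K).Nonempty := by
    have hKW : K ∈ W.nests := by
      rw [← FTree.mem_nestSet, hWset]; exact Finset.mem_insert_of_mem hKV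
    obtain ⟨R_KW, hR_KW, hR_KWsup⟩ := hW.nests_to_subtree K hKW
    rw [← hR_KWsup, hW.cell_eq_label hR_KW]
    exact hW.labels_nonempty _ hR_KW.label_mem
  have hcellNsub : W.ncell N ⊆ ({x, y} : Finset α) := by
    intro v hv
    have := keyA v hv
    rw [hcellVK] at this
    exact this
  rw [hKsupp]
  refine ⟨N, hWset, hNnotV, hNM₀, hminK, hcellNsub, ?_⟩
  -- case analysis on which of x, y lies in N
  obtain ⟨v, hv⟩ := hcellNne
  have hvxy : v ∈ ({x, y} : Finset α) := hcellNsub hv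
  have hvN : v ∈ N := (FTree.mem_ncell.mp hv).1
  by_cases hyN : y ∈ N
  · left
    have hxN : x ∉ N := by
      intro hxN
      obtain ⟨a, ha⟩ := hcellWKne
      rw [hcellWK, Finset.mem_sdiff, Finset.mem_insert, Finset.mem_singleton] at ha
      rcases ha.1 with rfl | rfl
      · exact ha.2 hxN
      · exact ha.2 hyN
    have hcellNy : W.ncell N = {y} := by
      have hvy : v = y := by
        rcases Finset.mem_insert.mp hvxy with rfl | h
        · exact absurd hvN hxN
        · exact Finset.mem_singleton.mp h
      subst hvy
      exact Finset.eq_singleton_of_card_one hcellNcard hv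
    have hcellKx : W.ncell K = {x} := by
      rw [hcellWK]
      ext a
      simp only [Finset.mem_sdiff, Finset.mem_insert, Finset.mem_singleton]
      constructor
      · rintro ⟨rfl | rfl, h2⟩
        · rfl
        · exact absurd hyN h2
      · rintro rfl; exact ⟨Or.inl rfl, hxN⟩
    exact ⟨hcellNy, hcellKx, hyN, hxN⟩
  · right
    have hxN : x ∈ N := by
      rcases Finset.mem_insert.mp hvxy with rfl | h
      · exact hvN
      · exact absurd ((Finset.mem_singleton.mp h) ▸ hvN) hyN
    have hcellNx : W.ncell N = {x} := by
      have hvx : v = x := by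
        rcases Finset.mem_insert.mp hvxy with rfl | h
        · rfl
        · exact absurd ((Finset.mem_singleton.mp h) ▸ hvN) hyN
      subst hvx
      exact Finset.eq_singleton_of_card_one hcellNcard hv
    have hcellKy : W.ncell K = {y} := by
      rw [hcellWK]
      ext a
      simp only [Finset.mem_sdiff, Finset.mem_insert, Finset.mem_singleton]
      constructor
      · rintro ⟨rfl | rfl, h2⟩
        · exact absurd hxN h2
        · rfl
      · rintro rfl; exact ⟨Or.inr rfl, hyN⟩
    exact ⟨hcellNx, hcellKy, hxN, hyN⟩

end ExtractCore
section Final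

set_option linter.unusedSectionVars false
set_option maxHeartbeats 1000000

variable {α : Type*} [LinearOrder α]

open FTree AtomicHypergraph

theorem extract_w {H : AtomicHypergraph α} {V W : FTree α} {N : Finset α} {x y : α}
    (hW : IsConstruct H W) (hW1 : ∀ X ∈ W.labels, X.card = 1)
    (hWset : W.nestSet = insert N V.nestSet)
    (hcellNsub : W.ncell N ⊆ ({x, y} : Finset α)) :
    ∀ w ∈ H.verts, w ≠ x → w ≠ y →
      ∃ M ∈ V.nestSet, w ∈ V.ncell M ∧ W.suppAt {w} = M := by
  intro w hw hwx hwy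
  obtain ⟨R_w, hR_w, hwlab⟩ := hW.exists_subtree_label_mem w
    (by rw [hW.support_eq_verts]; exact hw)
  have hlabeq : R_w.label = {w} :=
    Finset.eq_singleton_of_card_one (hW1 _ hR_w.label_mem) hwlab
  have hsupp : W.suppAt {w} = R_w.support := by
    rw [← hlabeq]; exact hW.suppAt_eq hR_w
  have hMW : R_w.support ∈ W.nestSet := FTree.mem_nestSet.mpr hR_w.support_mem_nests
  have hwcW : w ∈ W.ncell R_w.support := by
    rw [hW.cell_eq_label hR_w]; exact hwlab
  have hMV : R_w.support ∈ V.nestSet := by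
    rw [hWset] at hMW
    rcases Finset.mem_insert.mp hMW with h | h
    · exfalso
      have := hcellNsub (h ▸ hwcW)
      rcases Finset.mem_insert.mp this with h' | h'
      · exact hwx h'
      · exact hwy (Finset.mem_singleton.mp h')
    · exact h
  exact ⟨R_w.support, hMV, ncell_insert_subset hWset _ hwcW, hsupp⟩

theorem vcell_unique {H : AtomicHypergraph α} {V : FTree α} (hV : IsConstruct H V)
    {M M' : Finset α} {w : α} (hM : M ∈ V.nestSet) (hM' : M' ∈ V.nestSet)
    (h1 : w ∈ V.ncell M) (h2 : w ∈ V.ncell M') : M = M' := by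
  obtain ⟨R, hR, rfl⟩ := hV.nests_to_subtree M (FTree.mem_nestSet.mp hM)
  obtain ⟨R', hR', rfl⟩ := hV.nests_to_subtree M' (FTree.mem_nestSet.mp hM')
  rw [hV.cell_eq_label hR] at h1
  rw [hV.cell_eq_label hR'] at h2
  rw [hV.subtree_eq_of_label_meet R R' hR hR' w h1 h2]

theorem card_split {H : AtomicHypergraph α} {K C : Finset α} {a b : α}
    (hKH : K ⊆ H.verts)
    (hC : (H.restrict (K \ {b})).IsComponent C) (haC : a ∈ C) :
    (H.sat.filter fun e => a ∈ e ∧ e ⊆ K).card =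
    (H.sat.filter fun e => a ∈ e ∧ e ⊆ C).card +
    (H.sat.filter fun e => a ∈ e ∧ b ∈ e ∧ e ⊆ K).card := by
  classical
  have hKbH : K \ {b} ⊆ H.verts := Finset.sdiff_subset.trans hKH
  have hCsub : C ⊆ K \ {b} := by
    have := hC.subset
    rwa [AtomicHypergraph.restrict_verts _ _ hKbH] at this
  have key : ∀ e ∈ H.sat, ((a ∈ e ∧ e ⊆ K) ∧ b ∉ e) ↔ (a ∈ e ∧ e ⊆ C) := by
    intro e he
    constructor
    · rintro ⟨⟨hae, heK⟩, hbe⟩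
      refine ⟨hae, ?_⟩
      have heKb : e ⊆ K \ {b} := by
        intro v hv
        refine Finset.mem_sdiff.mpr ⟨heK hv, ?_⟩
        rw [Finset.mem_singleton]
        rintro rfl
        exact hbe hv
      refine AtomicHypergraph.subset_component hC haC hae ?_ ?_
      · rwa [AtomicHypergraph.restrict_verts _ _ hKbH]
      · rw [AtomicHypergraph.restrict_restrict _ heKb]
        exact (AtomicHypergraph.mem_sat.mp he).2
    · rintro ⟨hae, heC⟩
      refine ⟨⟨hae, (heC.trans hCsub).trans Finset.sdiff_subset⟩, ?_⟩
      intro hbe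
      have := hCsub (heC hbe)
      rw [Finset.mem_sdiff, Finset.mem_singleton] at this
      exact this.2 rfl
  have e1 : (H.sat.filter fun e => a ∈ e ∧ e ⊆ C) =
      ((H.sat.filter fun e => a ∈ e ∧ e ⊆ K).filter fun e => ¬b ∈ e) := by
    rw [Finset.filter_filter]
    exact Finset.filter_congr (fun e he => (key e he).symm)
  have e2 : (H.sat.filter fun e => a ∈ e ∧ b ∈ e ∧ e ⊆ K) =
      ((H.sat.filter fun e => a ∈ e ∧ e ⊆ K).filter fun e => b ∈ e) := by
    rw [Finset.filter_filter]
    apply Finset.filter_congr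
    intro e he
    constructor
    · rintro ⟨h1, h2, h3⟩; exact ⟨⟨h1, h3⟩, h2⟩
    · rintro ⟨⟨h1, h3⟩, h2⟩; exact ⟨h1, h2, h3⟩
  rw [e1, e2, add_comm]
  exact (Finset.card_filter_add_card_filter_not (fun e => b ∈ e)).symm

end Final


/-- key computation in Proposition `p:flip-partial-order`.  If the
constructions `S, T` are the endpoints of an edge with non-singleton node `{x,y}`, with
`{x}` the parent of `{y}` in `S`, and `K = supp(S ↾ x)`, then the coordinate vectors
`v^S, v^T` agree away from `x, y`, and `v^S_x - v^T_x = λ = v^T_y - v^S_y ≥ 1`, where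
`λ = |{e ∈ Sat(𝓗) : {x,y} ⊆ e ⊆ K}|`. -/
theorem stmt7 {α : Type*} [LinearOrder α] (H : AtomicHypergraph α) (hH : H.Connected)
    (S T V : FTree α) (x y : α)
    (hS : IsConstruction H S) (hT : IsConstruction H T) (hST : S ≠ T)
    (hV : IsConstruct H V) (hdim : V.dim = 1) (hxy : x ≠ y)
    (hnode : ({x, y} : Finset α) ∈ V.labels)
    (hSV : FTree.CoveredBy S V) (hTV : FTree.CoveredBy T V)
    (hpar : FTree.ParentChild ({x} : Finset α) ({y} : Finset α) S) :
    (∀ w ∈ H.verts, w ≠ x → w ≠ y → coordVec H S w = coordVec H T w) ∧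
    ((coordVec H S x : ℤ) - (coordVec H T x : ℤ) =
      ((H.sat.filter fun e => x ∈ e ∧ y ∈ e ∧ e ⊆ S.suppAt {x}).card : ℤ)) ∧
    ((coordVec H T y : ℤ) - (coordVec H S y : ℤ) =
      ((H.sat.filter fun e => x ∈ e ∧ y ∈ e ∧ e ⊆ S.suppAt {x}).card : ℤ)) ∧
    1 ≤ (H.sat.filter fun e => x ∈ e ∧ y ∈ e ∧ e ⊆ S.suppAt {x}).card := by
  classical
  obtain ⟨hSc, hS1⟩ := hS
  obtain ⟨hTc, hT1⟩ := hT
  -- the big node K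
  obtain ⟨R_V, hR_V, hR_Vlab⟩ := hV.labels_to_subtree _ hnode
  have hKsupp : V.suppAt {x, y} = R_V.support := by
    rw [← hR_Vlab]; exact hV.suppAt_eq hR_V
  set K := V.suppAt ({x, y} : Finset α) with hKdef
  have hKV : K ∈ V.nestSet := by
    rw [hKsupp]; exact FTree.mem_nestSet.mpr hR_V.support_mem_nests
  have hKconn : (H.restrict K).Connected := by
    rw [hKsupp]; exact hV.subtree_connected hH hR_V
  have hKH : K ⊆ H.verts := hV.nest_subset (FTree.mem_nestSet.mp hKV)
  have hxK : x ∈ K := by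
    rw [hKsupp]
    exact FTree.label_subset_support R_V (hR_Vlab ▸ Finset.mem_insert_self x {y})
  have hyK : y ∈ K := by
    rw [hKsupp]
    exact FTree.label_subset_support R_V
      (hR_Vlab ▸ Finset.mem_insert_of_mem (Finset.mem_singleton_self y))
  -- extract from S
  obtain ⟨N_S, hSset, hNSnotV, hNSK, hminKS, hcellNSsub, hsplitS⟩ :=
    extract_core hSc hS1 hV hdim hxy hnode hSV
  -- resolve the orientation of S using hpar
  have hparS := parentChild_suppAt_ssubset hSc hpar
  rcases hsplitS with ⟨hcNS, hcKS, hyNS, hxNS⟩ | ⟨hcNS, hcKS, hxNS, hyNS⟩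
  swap
  · exfalso
    obtain ⟨hsx, hsy, _⟩ := extract_case (x := y) (y := x) hSc hV hSset hNSnotV hKV hKconn
      hNSK hminKS hcNS hcKS
    rw [hsx, hsy] at hparS
    exact lt_irrefl _ (hparS.trans hNSK)
  obtain ⟨hsuppSy, hsuppSx, hcompS⟩ := extract_case hSc hV hSset hNSnotV hKV hKconn
    hNSK hminKS hcNS hcKS
  -- extract from T
  obtain ⟨N_T, hTset, hNTnotV, hNTK, hminKT, hcellNTsub, hsplitT⟩ :=
    extract_core hTc hT1 hV hdim hxy hnode hTV
  rcases hsplitT with ⟨hcNT, hcKT, hyNT, hxNT⟩ | ⟨hcNT, hcKT, hxNT, hyNT⟩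
  · exfalso
    obtain ⟨_, _, hcompT⟩ := extract_case hTc hV hTset hNTnotV hKV hKconn
      hNTK hminKT hcNT hcKT
    have hNeq : N_S = N_T := hcompS.eq_of_meet hcompT
      ⟨y, Finset.mem_inter.mpr ⟨hyNS, hyNT⟩⟩
    exact hST (hSc.eq_of_nestSet_eq T hTc (by rw [hSset, hTset, hNeq]))
  obtain ⟨hsuppTx, hsuppTy, hcompT⟩ := extract_case (x := y) (y := x) hTc hV hTset hNTnotV
    hKV hKconn hNTK hminKT hcNT hcKT
  -- assemble the four statements
  refine ⟨?_, ?_, ?_, ?_⟩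
  · -- coordinates away from x and y agree
    intro w hw hwx hwy
    obtain ⟨M, hMV, hwcM, hsuppSw⟩ := extract_w hSc hS1 hSset hcellNSsub w hw hwx hwy
    obtain ⟨M', hM'V, hwcM', hsuppTw⟩ := extract_w hTc hT1 hTset hcellNTsub w hw hwx hwy
    have : M = M' := vcell_unique hV hMV hM'V hwcM hwcM'
    rw [coordVec, coordVec, hsuppSw, hsuppTw, this]
  · -- the x-coordinate identity
    rw [coordVec, coordVec, hsuppSx, hsuppTx]
    have := card_split (C := N_T) (a := x) (b := y) hKH hcompT hxNT
    rw [this]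
    push_cast
    ring
  · -- the y-coordinate identity
    rw [coordVec, coordVec, hsuppSy, hsuppTy, hsuppSx]
    have := card_split (C := N_S) (a := y) (b := x) hKH hcompS hyNS
    rw [this]
    have hcomm : (H.sat.filter fun e => y ∈ e ∧ x ∈ e ∧ e ⊆ K) =
        (H.sat.filter fun e => x ∈ e ∧ y ∈ e ∧ e ⊆ K) := by
      apply Finset.filter_congr
      intro e he
      constructor
      · rintro ⟨h1, h2, h3⟩; exact ⟨h2, h1, h3⟩
      · rintro ⟨h1, h2, h3⟩; exact ⟨h2, h1, h3⟩
    rw [hcomm]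
    push_cast
    ring
  · -- the count is at least one
    rw [hsuppSx]
    apply Finset.card_pos.mpr
    refine ⟨K, Finset.mem_filter.mpr ⟨AtomicHypergraph.mem_sat.mpr ⟨hKH, hKconn⟩, hxK, hyK,
      subset_rfl⟩⟩

end
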